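/- arXiv:0711.3774 — 3 statements merged into one kernel-verified Lean document; each statement's English description precedes it below -/
import Mathlib

section
/- Every representation of the Heisenberg group H_n over an algebraically closed field of characteristic 0 with central character [r], r coprime to n, is a direct sum of irreducible n-dimensional representations, and up to equivalence there is a unique irreducible n-dimensional representation of H_n with central character [r]. -/
/-- A submodule invariant under a representation. -/
def RepInvariant {G V : Type*} [Group G] [AddCommGroup V] [Module ℂ V]
    (ρ : Representation ℂ G V) (p : Submodule ℂ V) : Prop :=
  ∀ g : G, ∀ v ∈ p, ρ g v ∈ p

/-- A representation is irreducible on an invariant submodule `p` if `p` is nonzero and the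
only invariant submodules contained in `p` are `⊥` and `p`. -/
def IrreducibleOn {G V : Type*} [Group G] [AddCommGroup V] [Module ℂ V]
    (ρ : Representation ℂ G V) (p : Submodule ℂ V) : Prop :=
  p ≠ ⊥ ∧ ∀ q : Submodule ℂ V, q ≤ p → RepInvariant ρ q → q = ⊥ ∨ q = p

/-- A representation has central character `[r]` (with respect to an identification `ζ` of the
centre with `n`-th roots of unity) if every central element acts as `ζ^r • id`. -/
def HasCentralChar {G V : Type*} [Group G] [AddCommGroup V] [Module ℂ V]
    (ζ : Subgroup.center G →* ℂˣ) (r : ℕ) (ρ : Representation ℂ G V) : Prop :=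
  ∀ z : Subgroup.center G, ρ (z : G) = ((ζ z : ℂ) ^ r) • (LinearMap.id : V →ₗ[ℂ] V)


open Module LinearMap Representation

open scoped commutatorElement




section A
variable {G : Type*} [Group G]

lemma heis_exists_comm {n r : ℕ} (hr : Nat.Coprime r n)
    (ζ : Subgroup.center G →* ℂˣ) (hζinj : Function.Injective ζ)
    (hζord : ∀ z : Subgroup.center G, (ζ z : ℂ) ^ n = 1)
    (hcomm : ∀ x y : G, ⁅x, y⁆ ∈ Subgroup.center G)
    {g : G} (hg : g ∉ Subgroup.center G) :
    ∃ x : G, ((ζ ⟨⁅x, g⁆, hcomm x g⟩ : ℂˣ) : ℂ) ^ r ≠ 1 := by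
  by_contra h
  push_neg at h
  apply hg
  rw [Subgroup.mem_center_iff]
  intro x
  have hz : (⟨⁅x, g⁆, hcomm x g⟩ : Subgroup.center G) = 1 := by
    apply hζinj
    rw [map_one]
    set z : Subgroup.center G := ⟨⁅x, g⁆, hcomm x g⟩
    have h1 : ((ζ z : ℂˣ) : ℂ) ^ r = 1 := h x
    have h2 : ((ζ z : ℂˣ) : ℂ) ^ n = 1 := hζord z
    have hd : orderOf ((ζ z : ℂˣ) : ℂ) ∣ 1 := by
      rw [← hr]
      exact Nat.dvd_gcd (orderOf_dvd_of_pow_eq_one h1) (orderOf_dvd_of_pow_eq_one h2)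
    have : ((ζ z : ℂˣ) : ℂ) = 1 := orderOf_eq_one_iff.mp (Nat.eq_one_of_dvd_one hd ▸ rfl)
    exact Units.ext this
  have hz' : ⁅x, g⁆ = 1 := congrArg Subtype.val hz
  exact (commutatorElement_eq_one_iff_commute.mp hz').eq

lemma heis_trace_eq_zero {n r : ℕ} (hr : Nat.Coprime r n)
    (ζ : Subgroup.center G →* ℂˣ) (hζinj : Function.Injective ζ)
    (hζord : ∀ z : Subgroup.center G, (ζ z : ℂ) ^ n = 1)
    (hcomm : ∀ x y : G, ⁅x, y⁆ ∈ Subgroup.center G)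
    {V : Type} [AddCommGroup V] [Module ℂ V] [FiniteDimensional ℂ V]
    (ρ : Representation ℂ G V) (hρ : HasCentralChar ζ r ρ)
    {g : G} (hg : g ∉ Subgroup.center G) :
    trace ℂ V (ρ g) = 0 := by
  obtain ⟨x, hx⟩ := heis_exists_comm hr ζ hζinj hζord hcomm hg
  set c : ℂ := ((ζ ⟨⁅x, g⁆, hcomm x g⟩ : ℂˣ) : ℂ) ^ r with hc
  have h1 : ρ (x * g * x⁻¹) = c • ρ g := by
    have hxg : x * g * x⁻¹ = ⁅x, g⁆ * g := by group
    rw [hxg, map_mul, hρ ⟨⁅x, g⁆, hcomm x g⟩]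
    ext v
    simp [hc]
  have h2 : trace ℂ V (ρ (x * g * x⁻¹)) = trace ℂ V (ρ g) := by
    have e : ρ (x * g * x⁻¹) = ρ x * ρ g * ρ x⁻¹ := by rw [map_mul, map_mul]
    rw [e, trace_mul_comm, ← mul_assoc, ← map_mul, inv_mul_cancel, map_one, one_mul]
  rw [h1, map_smul, smul_eq_mul] at h2
  have : (c - 1) * trace ℂ V (ρ g) = 0 := by linear_combination h2
  rcases mul_eq_zero.mp this with h | h
  · exact absurd (sub_eq_zero.mp h) hx
  · exact h

end A
section B
open TensorProduct
variable {G : Type*} [Group G]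

lemma avg_trace [Fintype G] [Invertible ((Fintype.card G : ℂ))]
    {V : Type} [AddCommGroup V] [Module ℂ V] [FiniteDimensional ℂ V]
    (ρ : Representation ℂ G V) :
    ⅟(Fintype.card G : ℂ) • ∑ g : G, trace ℂ V (ρ g) = finrank ℂ (invariants ρ) := by
  rw [← (isProj_averageMap ρ).trace]
  simp [GroupAlgebra.average, _root_.map_sum]

lemma trace_linHom {V W : Type} [AddCommGroup V] [Module ℂ V] [FiniteDimensional ℂ V]
    [AddCommGroup W] [Module ℂ W] [FiniteDimensional ℂ W]
    (ρV : Representation ℂ G V) (ρW : Representation ℂ G W) (g : G) :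
    trace ℂ (V →ₗ[ℂ] W) ((linHom ρV ρW) g) = trace ℂ V (ρV g⁻¹) * trace ℂ W (ρW g) := by
  have he : ((dualTensorHomEquiv ℂ V W : Module.Dual ℂ V ⊗[ℂ] W ≃ₗ[ℂ] (V →ₗ[ℂ] W)) :
      Module.Dual ℂ V ⊗[ℂ] W →ₗ[ℂ] (V →ₗ[ℂ] W)) = dualTensorHom ℂ V W :=
    rfl
  have key : (linHom ρV ρW) g =
      (dualTensorHomEquiv ℂ V W).conj (TensorProduct.map (ρV.dual g) (ρW g)) := by
    rw [LinearEquiv.conj_apply]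
    have hcomm := dualTensorHom_comm ρV ρW g
    rw [← he] at hcomm
    rw [hcomm]
    ext u
    simp
  rw [key, trace_conj', trace_tensorProduct', dual_apply, trace_transpose']

end B
section C
variable {G : Type*} [Group G]

lemma heis_finrank_invariants [Fintype G] {n r : ℕ} (hn : 0 < n)
    (hcard : Fintype.card G = n ^ 3) (hZcard : Nat.card (Subgroup.center G) = n)
    (hcomm : ∀ x y : G, ⁅x, y⁆ ∈ Subgroup.center G) (hr : Nat.Coprime r n)
    (ζ : Subgroup.center G →* ℂˣ) (hζinj : Function.Injective ζ)
    (hζord : ∀ z : Subgroup.center G, (ζ z : ℂ) ^ n = 1)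
    {V W : Type} [AddCommGroup V] [Module ℂ V] [FiniteDimensional ℂ V]
    [AddCommGroup W] [Module ℂ W] [FiniteDimensional ℂ W]
    (ρV : Representation ℂ G V) (ρW : Representation ℂ G W)
    (hV : HasCentralChar ζ r ρV) (hW : HasCentralChar ζ r ρW) :
    finrank ℂ (invariants (linHom ρV ρW)) * n ^ 2 = finrank ℂ V * finrank ℂ W := by
  classical
  have hcne : ((Fintype.card G : ℂ)) ≠ 0 := by
    rw [hcard, Nat.cast_ne_zero]
    positivity
  have hinv : Invertible ((Fintype.card G : ℂ)) := invertibleOfNonzero hcne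
  have havg := avg_trace (G := G) (linHom ρV ρW)
  -- compute the sum
  have hsum : ∑ g : G, trace ℂ (V →ₗ[ℂ] W) ((linHom ρV ρW) g)
      = (n : ℂ) * ((finrank ℂ V : ℂ) * (finrank ℂ W : ℂ)) := by
    have h1 : ∀ g : G, trace ℂ (V →ₗ[ℂ] W) ((linHom ρV ρW) g)
        = if g ∈ Subgroup.center G then ((finrank ℂ V : ℂ) * (finrank ℂ W : ℂ)) else 0 := by
      intro g
      rw [trace_linHom]
      by_cases hg : g ∈ Subgroup.center G
      · rw [if_pos hg]
        set z : Subgroup.center G := ⟨g, hg⟩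
        have hz1 : ρV g⁻¹ = ((ζ z⁻¹ : ℂ) ^ r) • (LinearMap.id : V →ₗ[ℂ] V) := hV z⁻¹
        have hz2 : ρW g = ((ζ z : ℂ) ^ r) • (LinearMap.id : W →ₗ[ℂ] W) := hW z
        rw [hz1, hz2, map_smul, map_smul, trace_id, trace_id, smul_eq_mul, smul_eq_mul]
        have hmul : ((ζ z⁻¹ : ℂ)) * ((ζ z : ℂ)) = 1 := by
          rw [← Units.val_mul, ← map_mul, inv_mul_cancel, map_one, Units.val_one]
        calc (ζ ↑z⁻¹ : ℂ) ^ r * (finrank ℂ V : ℂ) * ((ζ ↑z : ℂ) ^ r * (finrank ℂ W : ℂ))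
            = ((ζ ↑z⁻¹ : ℂ) * (ζ ↑z : ℂ)) ^ r * ((finrank ℂ V : ℂ) * (finrank ℂ W : ℂ)) := by
              rw [mul_pow]; ring
          _ = (finrank ℂ V : ℂ) * (finrank ℂ W : ℂ) := by rw [hmul, one_pow, one_mul]
      · rw [if_neg hg]
        rw [heis_trace_eq_zero hr ζ hζinj hζord hcomm ρW hW hg, mul_zero]
    rw [Finset.sum_congr rfl (fun g _ => h1 g),
      ← Finset.sum_filter (· ∈ Subgroup.center G)
        (fun _ => ((finrank ℂ V : ℂ) * (finrank ℂ W : ℂ))),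
      Finset.sum_const]
    have hcard' : (Finset.univ.filter (· ∈ Subgroup.center G)).card = n := by
      rw [← hZcard, Nat.card_eq_fintype_card, Fintype.card_subtype]
    rw [hcard', nsmul_eq_mul]
  -- deduce the claim
  have hmain : (Fintype.card G : ℂ) * (finrank ℂ (invariants (linHom ρV ρW)) : ℂ)
      = (n : ℂ) * ((finrank ℂ V : ℂ) * (finrank ℂ W : ℂ)) := by
    rw [← havg, smul_eq_mul, ← mul_assoc, mul_invOf_self, one_mul, hsum]
  rw [hcard] at hmain
  push_cast at hmain
  have hn' : (n : ℂ) ≠ 0 := Nat.cast_ne_zero.mpr hn.ne'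
  have h2 : (n : ℂ) * ((finrank ℂ (invariants (linHom ρV ρW)) : ℂ) * (n : ℂ) ^ 2)
      = (n : ℂ) * ((finrank ℂ V : ℂ) * (finrank ℂ W : ℂ)) := by
    rw [← hmain]; ring
  have h3 := mul_left_cancel₀ hn' h2
  exact_mod_cast h3

end C
section D
variable {G : Type*} [Group G]

lemma rep_cancel₁ {V : Type} [AddCommGroup V] [Module ℂ V] (ρ : Representation ℂ G V)
    (g : G) (v : V) : ρ g (ρ g⁻¹ v) = v := by
  rw [← Module.End.mul_apply, ← map_mul, mul_inv_cancel, map_one, Module.End.one_apply]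

lemma rep_cancel₂ {V : Type} [AddCommGroup V] [Module ℂ V] (ρ : Representation ℂ G V)
    (g : G) (v : V) : ρ g⁻¹ (ρ g v) = v := by
  rw [← Module.End.mul_apply, ← map_mul, inv_mul_cancel, map_one, Module.End.one_apply]

lemma mem_linHom_invariants_iff {V W : Type} [AddCommGroup V] [Module ℂ V]
    [AddCommGroup W] [Module ℂ W]
    (ρV : Representation ℂ G V) (ρW : Representation ℂ G W) (φ : V →ₗ[ℂ] W) :
    φ ∈ invariants (linHom ρV ρW) ↔ ∀ g v, φ (ρV g v) = ρW g (φ v) := by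
  rw [mem_invariants]
  constructor
  · intro h g v
    have := congrArg (fun ψ : V →ₗ[ℂ] W => ψ (ρV g v)) (h g)
    simp only [linHom_apply, LinearMap.comp_apply] at this
    rw [rep_cancel₂] at this
    exact this.symm
  · intro h g
    ext v
    simp only [linHom_apply, LinearMap.comp_apply]
    rw [← h g (ρV g⁻¹ v), rep_cancel₁]

/-- The restriction of a representation to an invariant submodule. -/
def subRep {V : Type} [AddCommGroup V] [Module ℂ V] (ρ : Representation ℂ G V)
    (q : Submodule ℂ V) (hq : RepInvariant ρ q) : Representation ℂ G q where
  toFun g := (ρ g).restrict (hq g)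
  map_one' := by ext v; simp [LinearMap.restrict_apply]
  map_mul' g h := by ext v; simp [LinearMap.restrict_apply]

@[simp] lemma subRep_coe {V : Type} [AddCommGroup V] [Module ℂ V] (ρ : Representation ℂ G V)
    (q : Submodule ℂ V) (hq : RepInvariant ρ q) (g : G) (v : q) :
    ((subRep ρ q hq g v : q) : V) = ρ g (v : V) := rfl

lemma subRep_central {V : Type} [AddCommGroup V] [Module ℂ V] (ρ : Representation ℂ G V)
    (q : Submodule ℂ V) (hq : RepInvariant ρ q) {r : ℕ} {ζ : Subgroup.center G →* ℂˣ}
    (hρ : HasCentralChar ζ r ρ) : HasCentralChar ζ r (subRep ρ q hq) := by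
  intro z
  ext v
  have := congrArg (fun ψ : V →ₗ[ℂ] V => ψ (v : V)) (hρ z)
  simpa using this

/-- Maschke: every invariant submodule has an invariant complement. -/
lemma invariant_compl [Fintype G] {V : Type} [AddCommGroup V] [Module ℂ V]
    (ρ : Representation ℂ G V) {q : Submodule ℂ V} (hq : RepInvariant ρ q) :
    ∃ q' : Submodule ℂ V, RepInvariant ρ q' ∧ IsCompl q q' := by
  obtain ⟨q₀, hq₀⟩ := Submodule.exists_isCompl q
  set π : V →ₗ[ℂ] V := q.subtype ∘ₗ q.projectionOnto q₀ hq₀ with hπ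
  have hπmem : ∀ v : V, π v ∈ q := fun v => Submodule.coe_mem _
  have hπid : ∀ v ∈ q, π v = v := by
    intro v hv
    simp [hπ, Submodule.projection_apply_of_mem_left hq₀ hv]
  set c : ℂ := (Fintype.card G : ℂ)⁻¹ with hcdef
  set π₀ : V →ₗ[ℂ] V := c • ∑ g : G, ρ g ∘ₗ π ∘ₗ ρ g⁻¹ with hπ₀
  have hcard : (Fintype.card G : ℂ) ≠ 0 := Nat.cast_ne_zero.mpr Fintype.card_ne_zero
  have happly : ∀ v : V, π₀ v = c • ∑ g : G, ρ g (π (ρ g⁻¹ v)) := by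
    intro v
    simp [hπ₀, LinearMap.sum_apply]
  have hπ₀mem : ∀ v : V, π₀ v ∈ q := by
    intro v
    rw [happly]
    exact Submodule.smul_mem _ _ (Submodule.sum_mem _ fun g _ => hq g _ (hπmem _))
  have hπ₀id : ∀ v ∈ q, π₀ v = v := by
    intro v hv
    rw [happly]
    have : ∀ g : G, ρ g (π (ρ g⁻¹ v)) = v := by
      intro g
      rw [hπid _ (hq g⁻¹ v hv), rep_cancel₁]
    rw [Finset.sum_congr rfl fun g _ => this g, Finset.sum_const, Finset.card_univ]
    rw [← Nat.cast_smul_eq_nsmul ℂ, smul_smul, hcdef, inv_mul_cancel₀ hcard, one_smul]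
  have hequi : ∀ (h : G) (v : V), π₀ (ρ h v) = ρ h (π₀ v) := by
    intro h v
    rw [happly, happly, map_smul, map_sum]
    congr 1
    refine Fintype.sum_equiv (Equiv.mulLeft h⁻¹) _ _ fun g => ?_
    simp only [Equiv.coe_mulLeft]
    have e1 : ρ g⁻¹ (ρ h v) = ρ ((h⁻¹ * g)⁻¹) v := by
      rw [← Module.End.mul_apply, ← map_mul]
      congr 2
      group
    have e2 : ρ h ((ρ (h⁻¹ * g)) (π (ρ ((h⁻¹ * g)⁻¹) v)))
        = ρ g (π (ρ ((h⁻¹ * g)⁻¹) v)) := by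
      rw [← Module.End.mul_apply, ← map_mul, mul_inv_cancel_left]
    rw [e1, e2]
  refine ⟨LinearMap.ker π₀, ?_, ?_⟩
  · intro g v hv
    rw [LinearMap.mem_ker] at hv ⊢
    rw [hequi, hv, map_zero]
  · constructor
    · rw [Submodule.disjoint_def]
      intro v hv hker
      rw [LinearMap.mem_ker] at hker
      rw [← hπ₀id v hv, hker]
    · rw [codisjoint_iff_le_sup]
      intro v _
      refine Submodule.mem_sup.mpr ⟨π₀ v, hπ₀mem v, v - π₀ v, ?_, by abel⟩
      rw [LinearMap.mem_ker, map_sub, hπ₀id _ (hπ₀mem v), sub_self]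

/-- Schur's lemma. -/
lemma schur_scalar {V : Type} [AddCommGroup V] [Module ℂ V] [FiniteDimensional ℂ V]
    [Nontrivial V] (ρ : Representation ℂ G V)
    (hirr : ∀ q : Submodule ℂ V, RepInvariant ρ q → q = ⊥ ∨ q = ⊤)
    (φ : V →ₗ[ℂ] V) (hφ : ∀ g v, φ (ρ g v) = ρ g (φ v)) :
    ∃ c : ℂ, φ = c • (LinearMap.id : V →ₗ[ℂ] V) := by
  obtain ⟨c, hc⟩ := Module.End.exists_eigenvalue (φ : Module.End ℂ V)
  obtain ⟨v, hv⟩ := hc.exists_hasEigenvector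
  refine ⟨c, ?_⟩
  have hkinv : RepInvariant ρ (LinearMap.ker (φ - c • LinearMap.id)) := by
    intro g w hw
    rw [LinearMap.mem_ker] at hw ⊢
    have : φ w - c • w = 0 := by simpa using hw
    have h2 : φ (ρ g w) - c • ρ g w = 0 := by
      rw [hφ g w, ← map_smul, ← map_sub, this, map_zero]
    simpa using h2
  have hker : LinearMap.ker (φ - c • LinearMap.id) = ⊤ := by
    rcases hirr _ hkinv with h | h
    · exfalso
      have hvk : v ∈ LinearMap.ker (φ - c • LinearMap.id) := by
        rw [LinearMap.mem_ker]
        have := hv.apply_eq_smul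
        simpa [sub_eq_zero] using this
      rw [h, Submodule.mem_bot] at hvk
      exact hv.2 hvk
    · exact h
  ext w
  have : w ∈ LinearMap.ker (φ - c • LinearMap.id) := hker ▸ Submodule.mem_top
  rw [LinearMap.mem_ker] at this
  have := sub_eq_zero.mp (by simpa using this)
  simpa using this

end D

section E
variable {G : Type*} [Group G]

lemma id_mem_linHom_invariants {V : Type} [AddCommGroup V] [Module ℂ V]
    (ρ : Representation ℂ G V) :
    (LinearMap.id : V →ₗ[ℂ] V) ∈ invariants (linHom ρ ρ) := by
  rw [mem_linHom_invariants_iff]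
  intro g v
  rfl

lemma finrank_end_invariants_eq_one {V : Type} [AddCommGroup V] [Module ℂ V]
    [FiniteDimensional ℂ V] [Nontrivial V] (ρ : Representation ℂ G V)
    (hirr : ∀ q : Submodule ℂ V, RepInvariant ρ q → q = ⊥ ∨ q = ⊤) :
    finrank ℂ (invariants (linHom ρ ρ)) = 1 := by
  have hid0 : (LinearMap.id : V →ₗ[ℂ] V) ≠ 0 := by
    obtain ⟨v, hv⟩ := exists_ne (0 : V)
    intro h
    exact hv (by simpa using congrArg (fun ψ : V →ₗ[ℂ] V => ψ v) h)
  have hspan : invariants (linHom ρ ρ) = ℂ ∙ (LinearMap.id : V →ₗ[ℂ] V) := by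
    apply le_antisymm
    · intro φ hφ
      rw [mem_linHom_invariants_iff] at hφ
      obtain ⟨c, hc⟩ := schur_scalar ρ hirr φ hφ
      exact Submodule.mem_span_singleton.mpr ⟨c, hc.symm⟩
    · rw [Submodule.span_singleton_le_iff_mem]
      exact id_mem_linHom_invariants ρ
  rw [hspan, finrank_span_singleton hid0]

lemma simple_of_finrank_end_one [Fintype G] {V : Type} [AddCommGroup V] [Module ℂ V]
    [FiniteDimensional ℂ V] (ρ : Representation ℂ G V)
    (h1 : finrank ℂ (invariants (linHom ρ ρ)) = 1) :
    ∀ q : Submodule ℂ V, RepInvariant ρ q → q = ⊥ ∨ q = ⊤ := by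
  intro q hq
  by_contra hcon
  push_neg at hcon
  obtain ⟨hqbot, hqtop⟩ := hcon
  obtain ⟨a, ha, ha0⟩ := Submodule.ne_bot_iff q |>.mp hqbot
  have : Nontrivial V := nontrivial_of_ne a 0 ha0
  obtain ⟨q', hq'inv, hcompl⟩ := invariant_compl ρ hq
  have hq'bot : q' ≠ ⊥ := by
    intro h
    rw [h] at hcompl
    exact hqtop (by simpa using codisjoint_iff.mp hcompl.codisjoint)
  obtain ⟨b, hb, hb0⟩ := Submodule.ne_bot_iff q' |>.mp hq'bot
  set π : V →ₗ[ℂ] V := q.subtype ∘ₗ q.projectionOnto q' hcompl with hπ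
  have hπleft : ∀ v ∈ q, π v = v := fun v hv => by
    simp [hπ, Submodule.projection_apply_of_mem_left hcompl hv]
  have hπright : ∀ v ∈ q', π v = 0 := fun v hv => by
    simp [hπ, Submodule.projectionOnto_apply_of_mem_right hcompl hv]
  have hπinv : π ∈ invariants (linHom ρ ρ) := by
    rw [mem_linHom_invariants_iff]
    intro g v
    obtain ⟨x, hx, y, hy, rfl⟩ := Submodule.mem_sup.mp
      (by rw [hcompl.sup_eq_top]; exact Submodule.mem_top : v ∈ q ⊔ q')
    have l1 : π ((ρ g) x) = (ρ g) x := hπleft _ (hq g x hx)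
    have l2 : π ((ρ g) y) = 0 := hπright _ (hq'inv g y hy)
    have r1 : π (x + y) = x := by rw [map_add, hπleft x hx, hπright y hy, add_zero]
    rw [map_add (ρ g), map_add π, l1, l2, r1, add_zero]
  have hid0 : (LinearMap.id : V →ₗ[ℂ] V) ≠ 0 := by
    intro h
    exact ha0 (by simpa using congrArg (fun ψ : V →ₗ[ℂ] V => ψ a) h)
  have hspan : (ℂ ∙ (LinearMap.id : V →ₗ[ℂ] V)) = invariants (linHom ρ ρ) := by
    apply Submodule.eq_of_le_of_finrank_le
    · rw [Submodule.span_singleton_le_iff_mem]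
      exact id_mem_linHom_invariants ρ
    · rw [h1, finrank_span_singleton hid0]
  obtain ⟨c, hc⟩ := Submodule.mem_span_singleton.mp (hspan ▸ hπinv)
  have hc1 : c = 1 := by
    have : c • a = a := by
      have := congrArg (fun ψ : V →ₗ[ℂ] V => ψ a) hc
      simpa [hπleft a ha] using this
    have h0 : (c - 1) • a = 0 := by rw [sub_smul, one_smul, this, sub_self]
    rcases smul_eq_zero.mp h0 with h | h
    · exact sub_eq_zero.mp h
    · exact absurd h ha0
  have hc0 : c = 0 := by
    have : c • b = 0 := by
      have := congrArg (fun ψ : V →ₗ[ℂ] V => ψ b) hc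
      simpa [hπright b hb] using this
    rcases smul_eq_zero.mp this with h | h
    · exact h
    · exact absurd h hb0
  rw [hc0] at hc1
  exact one_ne_zero hc1.symm

lemma subRep_simple {V : Type} [AddCommGroup V] [Module ℂ V] (ρ : Representation ℂ G V)
    {q : Submodule ℂ V} (hinv : RepInvariant ρ q) (hirr : IrreducibleOn ρ q) :
    ∀ q' : Submodule ℂ q, RepInvariant (subRep ρ q hinv) q' → q' = ⊥ ∨ q' = ⊤ := by
  intro q' hq'
  have hmapinv : RepInvariant ρ (q'.map q.subtype) := by
    rintro g v ⟨w, hw, rfl⟩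
    exact ⟨subRep ρ q hinv g w, hq' g w hw, rfl⟩
  have hle : q'.map q.subtype ≤ q := Submodule.map_subtype_le q q'
  have hinj := Submodule.map_injective_of_injective (Submodule.injective_subtype q)
  rcases hirr.2 _ hle hmapinv with h | h
  · left; exact hinj (by rw [h, Submodule.map_bot])
  · right; exact hinj (by rw [h, Submodule.map_subtype_top])

lemma finrank_irreducibleOn [Fintype G] {n r : ℕ} (hn : 0 < n)
    (hcard : Fintype.card G = n ^ 3) (hZcard : Nat.card (Subgroup.center G) = n)
    (hcomm : ∀ x y : G, ⁅x, y⁆ ∈ Subgroup.center G) (hr : Nat.Coprime r n)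
    (ζ : Subgroup.center G →* ℂˣ) (hζinj : Function.Injective ζ)
    (hζord : ∀ z : Subgroup.center G, (ζ z : ℂ) ^ n = 1)
    {V : Type} [AddCommGroup V] [Module ℂ V] [FiniteDimensional ℂ V]
    (ρ : Representation ℂ G V) (hρ : HasCentralChar ζ r ρ)
    {q : Submodule ℂ V} (hinv : RepInvariant ρ q) (hirr : IrreducibleOn ρ q) :
    finrank ℂ q = n := by
  have hnt : Nontrivial q := by
    obtain ⟨a, ha, ha0⟩ := Submodule.ne_bot_iff q |>.mp hirr.1
    exact nontrivial_of_ne ⟨a, ha⟩ 0 (by simpa using ha0)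
  have h1 := finrank_end_invariants_eq_one (subRep ρ q hinv) (subRep_simple ρ hinv hirr)
  have h2 := heis_finrank_invariants hn hcard hZcard hcomm hr ζ hζinj hζord
    (subRep ρ q hinv) (subRep ρ q hinv) (subRep_central ρ q hinv hρ)
    (subRep_central ρ q hinv hρ)
  rw [h1, one_mul] at h2
  have : n ^ 2 = finrank ℂ q ^ 2 := by rw [h2]; ring
  exact (Nat.pow_left_injective (by norm_num) this).symm
end E
section F
variable {G : Type*} [Group G]

lemma heis_equiv_aux [Fintype G] {n r : ℕ} (hn : 0 < n)
    (hcard : Fintype.card G = n ^ 3) (hZcard : Nat.card (Subgroup.center G) = n)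
    (hcomm : ∀ x y : G, ⁅x, y⁆ ∈ Subgroup.center G) (hr : Nat.Coprime r n)
    (ζ : Subgroup.center G →* ℂˣ) (hζinj : Function.Injective ζ)
    (hζord : ∀ z : Subgroup.center G, (ζ z : ℂ) ^ n = 1)
    (V₁ V₂ : Type) [AddCommGroup V₁] [Module ℂ V₁] [AddCommGroup V₂] [Module ℂ V₂]
    (ρ₁ : Representation ℂ G V₁) (ρ₂ : Representation ℂ G V₂)
    (h₁ : HasCentralChar ζ r ρ₁) (h₂ : HasCentralChar ζ r ρ₂)
    (hd₁ : finrank ℂ V₁ = n) (hd₂ : finrank ℂ V₂ = n) :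
    ∃ e : V₁ ≃ₗ[ℂ] V₂, ∀ (g : G) (v : V₁), e (ρ₁ g v) = ρ₂ g (e v) := by
  haveI fd₁ : FiniteDimensional ℂ V₁ := FiniteDimensional.of_finrank_pos (hd₁ ▸ hn)
  haveI fd₂ : FiniteDimensional ℂ V₂ := FiniteDimensional.of_finrank_pos (hd₂ ▸ hn)
  have hn2 : 0 < n ^ 2 := pow_pos hn 2
  have hEnd : finrank ℂ (invariants (linHom ρ₁ ρ₁)) = 1 := by
    have h := heis_finrank_invariants hn hcard hZcard hcomm hr ζ hζinj hζord ρ₁ ρ₁ h₁ h₁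
    rw [hd₁] at h
    have h' : finrank ℂ (invariants (linHom ρ₁ ρ₁)) * n ^ 2 = 1 * n ^ 2 := by
      rw [h, one_mul]; ring
    exact Nat.eq_of_mul_eq_mul_right hn2 h'
  have hsimp := simple_of_finrank_end_one ρ₁ hEnd
  have hHom : finrank ℂ (invariants (linHom ρ₁ ρ₂)) = 1 := by
    have h := heis_finrank_invariants hn hcard hZcard hcomm hr ζ hζinj hζord ρ₁ ρ₂ h₁ h₂
    rw [hd₁, hd₂] at h
    have h' : finrank ℂ (invariants (linHom ρ₁ ρ₂)) * n ^ 2 = 1 * n ^ 2 := by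
      rw [h, one_mul]; ring
    exact Nat.eq_of_mul_eq_mul_right hn2 h'
  have hne : invariants (linHom ρ₁ ρ₂) ≠ ⊥ := by
    intro h
    rw [h] at hHom
    simp at hHom
  obtain ⟨f, hfInv, hf0⟩ := Submodule.ne_bot_iff _ |>.mp hne
  have hequi := (mem_linHom_invariants_iff ρ₁ ρ₂ f).mp hfInv
  have hkerinv : RepInvariant ρ₁ (LinearMap.ker f) := by
    intro g v hv
    rw [LinearMap.mem_ker] at hv ⊢
    rw [hequi g v, hv, map_zero]
  have hker : LinearMap.ker f = ⊥ := by
    rcases hsimp _ hkerinv with h | h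
    · exact h
    · exact absurd (LinearMap.ker_eq_top.mp h) hf0
  have hinj : Function.Injective f := LinearMap.ker_eq_bot.mp hker
  have hsurj : Function.Surjective f :=
    (LinearMap.injective_iff_surjective_of_finrank_eq_finrank (hd₁.trans hd₂.symm)).mp hinj
  refine ⟨LinearEquiv.ofBijective f ⟨hinj, hsurj⟩, fun g v => ?_⟩
  show f (ρ₁ g v) = ρ₂ g (f v)
  exact hequi g v

end F
section G
variable {G : Type*} [Group G]

lemma heis_decomp_aux [Fintype G] {n r : ℕ} (hn : 0 < n)
    (hcard : Fintype.card G = n ^ 3) (hZcard : Nat.card (Subgroup.center G) = n)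
    (hcomm : ∀ x y : G, ⁅x, y⁆ ∈ Subgroup.center G) (hr : Nat.Coprime r n)
    (ζ : Subgroup.center G →* ℂˣ) (hζinj : Function.Injective ζ)
    (hζord : ∀ z : Subgroup.center G, (ζ z : ℂ) ^ n = 1) :
    ∀ (m : ℕ) (V : Type) (_ : AddCommGroup V) (_ : Module ℂ V) (_ : FiniteDimensional ℂ V)
      (ρ : Representation ℂ G V), HasCentralChar ζ r ρ → finrank ℂ V = m →
      ∃ (ι : Type) (_ : Finite ι) (_ : DecidableEq ι) (W : ι → Submodule ℂ V),
        (∀ i, RepInvariant ρ (W i)) ∧ (∀ i, IrreducibleOn ρ (W i)) ∧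
        (∀ i, finrank ℂ (W i) = n) ∧ DirectSum.IsInternal W := by
  intro m
  induction m using Nat.strong_induction_on with
  | _ m IH =>
  intro V _ _ _ ρ hρ hdim
  by_cases h0 : finrank ℂ V = 0
  · -- trivial case
    haveI hss : Subsingleton V := Module.finrank_zero_iff.mp h0
    refine ⟨Empty, inferInstance, inferInstance, fun i => i.elim,
      fun i => i.elim, fun i => i.elim, fun i => i.elim, ?_⟩
    rw [DirectSum.isInternal_submodule_iff_iSupIndep_and_iSup_eq_top]
    exact ⟨fun i => i.elim, Subsingleton.elim _ _⟩
  · have hVnt : Nontrivial V := Module.finrank_pos_iff.mp (Nat.pos_of_ne_zero h0)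
    set S : Set ℕ := {d | ∃ q : Submodule ℂ V, RepInvariant ρ q ∧ q ≠ ⊥ ∧ finrank ℂ q = d}
      with hSdef
    have hSne : S.Nonempty := by
      refine ⟨finrank ℂ V, ⊤, fun g v _ => Submodule.mem_top, ?_, finrank_top ℂ V⟩
      intro h
      obtain ⟨v, hv⟩ := exists_ne (0 : V)
      exact hv (Submodule.mem_bot ℂ |>.mp (h ▸ Submodule.mem_top))
    obtain ⟨q₀, hq₀inv, hq₀bot, hq₀rank⟩ := Nat.sInf_mem hSne
    have hq₀irr : IrreducibleOn ρ q₀ := by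
      refine ⟨hq₀bot, fun q hle hqinv => ?_⟩
      by_cases hqb : q = ⊥
      · left; exact hqb
      · right
        have h1 : sInf S ≤ finrank ℂ q := Nat.sInf_le ⟨q, hqinv, hqb, rfl⟩
        exact Submodule.eq_of_le_of_finrank_le hle (by omega)
    have hq₀n : finrank ℂ q₀ = n :=
      finrank_irreducibleOn hn hcard hZcard hcomm hr ζ hζinj hζord ρ hρ hq₀inv hq₀irr
    obtain ⟨q₁, hq₁inv, hcompl⟩ := invariant_compl ρ hq₀inv
    have hrank : finrank ℂ q₀ + finrank ℂ q₁ = finrank ℂ V :=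
      Submodule.finrank_add_eq_of_isCompl hcompl
    have hq₀pos : 0 < finrank ℂ q₀ := by
      rw [hq₀n]; exact hn
    have hlt : finrank ℂ q₁ < m := by omega
    obtain ⟨ι, hfin, hdec, W', hW'inv, hW'irr, hW'rank, hW'int⟩ :=
      IH (finrank ℂ q₁) hlt q₁ inferInstance inferInstance inferInstance
        (subRep ρ q₁ hq₁inv) (subRep_central ρ q₁ hq₁inv hρ) rfl
    haveI : Finite ι := hfin
    letI := hdec
    obtain ⟨hind, hsup⟩ :=
      (DirectSum.isInternal_submodule_iff_iSupIndep_and_iSup_eq_top W').mp hW'int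
    set W : Option ι → Submodule ℂ V :=
      fun o => o.elim q₀ (fun i => (W' i).map q₁.subtype) with hWdef
    have hWnone : W none = q₀ := rfl
    have hWsome : ∀ i, W (some i) = (W' i).map q₁.subtype := fun i => rfl
    have hWle : ∀ i, W (some i) ≤ q₁ := fun i => Submodule.map_subtype_le q₁ (W' i)
    haveI : Fintype ι := Fintype.ofFinite ι
    haveI hfo : Finite (Option ι) := Finite.of_fintype _
    refine ⟨Option ι, hfo, inferInstance, W, ?_, ?_, ?_, ?_⟩
    · rintro (_ | i)
      · exact hq₀inv
      · rintro g v ⟨w, hw, rfl⟩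
        exact ⟨subRep ρ q₁ hq₁inv g w, hW'inv i g w hw, rfl⟩
    · rintro (_ | i)
      · exact hq₀irr
      · constructor
        · intro h
          apply (hW'irr i).1
          apply Submodule.map_injective_of_injective (Submodule.injective_subtype q₁)
          rw [Submodule.map_bot]
          exact h
        · intro q hle hqinv
          have hleq₁ : q ≤ q₁ := hle.trans (hWle i)
          set qc : Submodule ℂ q₁ := q.comap q₁.subtype with hqc
          have hmapc : qc.map q₁.subtype = q := by
            rw [hqc, Submodule.map_comap_subtype]
            exact inf_eq_right.mpr hleq₁
          have hqcinv : RepInvariant (subRep ρ q₁ hq₁inv) qc := by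
            intro g w hw
            rw [Submodule.mem_comap] at hw ⊢
            exact hqinv g _ hw
          have hqcle : qc ≤ W' i := by
            intro w hw
            rw [Submodule.mem_comap] at hw
            obtain ⟨u, hu, huw⟩ := hle hw
            rwa [← Subtype.ext huw]
          rcases (hW'irr i).2 qc hqcle hqcinv with h | h
          · left; rw [← hmapc, h, Submodule.map_bot]
          · right
            rw [← hmapc, h]
            exact (hWsome i).symm
    · rintro (_ | i)
      · exact hq₀n
      · rw [hWsome i, Submodule.finrank_map_subtype_eq]
        exact hW'rank i
    · rw [DirectSum.isInternal_submodule_iff_iSupIndep_and_iSup_eq_top]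
      constructor
      · rw [iSupIndep_def]
        rintro (_ | i)
        · refine Disjoint.mono_right ?_ hcompl.disjoint
          apply iSup_le
          intro j
          apply iSup_le
          intro hj
          match j with
          | none => exact absurd rfl hj
          | some k => exact hWle k
        · have hB : Disjoint ((W' i).map q₁.subtype)
              (Submodule.map q₁.subtype (⨆ (j) (_ : j ≠ i), W' j)) := by
            rw [Submodule.disjoint_def]
            rintro x ⟨u, hu, rfl⟩ ⟨u', hu', huu⟩
            have : u' = u := Subtype.ext huu
            subst this
            have := Submodule.disjoint_def.mp ((iSupIndep_def.mp hind) i) u' hu hu'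
            rw [this]
            rfl
          have hsup_le : (⨆ (j) (_ : j ≠ some i), W j)
              ≤ q₀ ⊔ Submodule.map q₁.subtype (⨆ (j) (_ : j ≠ i), W' j) := by
            apply iSup_le
            intro j
            apply iSup_le
            intro hj
            match j with
            | none => exact le_sup_left
            | some k =>
              have hk : k ≠ i := fun h => hj (by rw [h])
              refine le_trans ?_ le_sup_right
              exact Submodule.map_mono (le_iSup_of_le k (le_iSup_of_le hk le_rfl))
          refine Disjoint.mono_right hsup_le ?_
          rw [Submodule.disjoint_def]
          intro x hxA hx
          obtain ⟨y, hy, z, hz, rfl⟩ := Submodule.mem_sup.mp hx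
          have hzq₁ : z ∈ q₁ := Submodule.map_subtype_le q₁ _ hz
          have hxq₁ : y + z ∈ q₁ := hWle i hxA
          have hyq₁ : y ∈ q₁ := by
            have : y = (y + z) - z := by abel
            rw [this]
            exact Submodule.sub_mem _ hxq₁ hzq₁
          have hy0 : y = 0 := Submodule.disjoint_def.mp hcompl.disjoint y hy hyq₁
          rw [hy0, zero_add] at hxA ⊢
          exact Submodule.disjoint_def.mp hB z hxA hz
      · rw [iSup_option W, hWnone]
        have : (⨆ i, W (some i)) = q₁ := by
          calc (⨆ i, W (some i)) = Submodule.map q₁.subtype (⨆ i, W' i) := by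
                rw [Submodule.map_iSup]
                exact iSup_congr hWsome
            _ = q₁ := by rw [hsup, Submodule.map_subtype_top]
        rw [this, hcompl.sup_eq_top]

end G

/-- **Representations of the Heisenberg group with central character `[r]`.**
Let `G` be a finite Heisenberg-type group of order `n³` with centre cyclic of order `n`,
abelian quotient killed by `n`, and `r` coprime to `n`. Then:
(i) every finite-dimensional representation of `G` over `ℂ` with central character `[r]` is an
internal direct sum of irreducible `n`-dimensional subrepresentations; and
(ii) any two `n`-dimensional representations with central character `[r]` are equivalent. -/
theorem heisenberg_central_char_reps {G : Type*} [Group G] [Fintype G]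
    (n r : ℕ) (hn : 0 < n) (hcard : Fintype.card G = n ^ 3)
    (hZcard : Nat.card (Subgroup.center G) = n)
    (hZcyc : IsCyclic (Subgroup.center G))
    (hcomm : ∀ x y : G, ⁅x, y⁆ ∈ Subgroup.center G)
    (hquot : ∀ g : G, g ^ n ∈ Subgroup.center G)
    (hr : Nat.Coprime r n)
    (ζ : Subgroup.center G →* ℂˣ) (hζinj : Function.Injective ζ)
    (hζord : ∀ z : Subgroup.center G, (ζ z : ℂ) ^ n = 1) :
    (∀ (V : Type) [AddCommGroup V] [Module ℂ V] [FiniteDimensional ℂ V]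
        (ρ : Representation ℂ G V), HasCentralChar ζ r ρ →
      ∃ (ι : Type) (_ : Finite ι) (_ : DecidableEq ι) (W : ι → Submodule ℂ V),
        (∀ i, RepInvariant ρ (W i)) ∧ (∀ i, IrreducibleOn ρ (W i)) ∧
        (∀ i, Module.finrank ℂ (W i) = n) ∧ DirectSum.IsInternal W) ∧
    (∀ (V₁ V₂ : Type) [AddCommGroup V₁] [Module ℂ V₁] [AddCommGroup V₂] [Module ℂ V₂]
        (ρ₁ : Representation ℂ G V₁) (ρ₂ : Representation ℂ G V₂),
      HasCentralChar ζ r ρ₁ → HasCentralChar ζ r ρ₂ →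
      Module.finrank ℂ V₁ = n → Module.finrank ℂ V₂ = n →
      ∃ e : V₁ ≃ₗ[ℂ] V₂, ∀ (g : G) (v : V₁), e (ρ₁ g v) = ρ₂ g (e v)) := by
  constructor
  · intro V _ _ _ ρ hρ
    exact heis_decomp_aux hn hcard hZcard hcomm hr ζ hζinj hζord (finrank ℂ V)
      V ‹_› ‹_› ‹_› ρ hρ rfl
  · intro V₁ V₂ _ _ _ _ ρ₁ ρ₂ h₁ h₂ hd₁ hd₂
    exact heis_equiv_aux hn hcard hZcard hcomm hr ζ hζinj hζord V₁ V₂ ρ₁ ρ₂ h₁ h₂ hd₁ hd₂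
end

section
/- Let m and n be coprime positive integers, and consider the theta groups Θ_m, Θ_n, Θ_{mn} of an elliptic curve E (pairs (f,T) as above with group law (f,S)*(g,T) = ((τ_T^* f)g, S+T)). Then the commutator of (f^n, S) and (g^m, T) in Θ_{mn} is trivial for all (f,S) ∈ Θ_m and (g,T) ∈ Θ_n; consequently ((f,S),(g,T)) ↦ (f^n, S)*(g^m, T) defines a group homomorphism Θ_m × Θ_n → Θ_{mn}. -/
/-!
An axiomatisation of the function field of an elliptic curve `E` over an algebraically
closed field `k` of characteristic zero.  `E` is the group of points, `Fn` the function
field `k̄(E)`, `ι` the inclusion of constants, `div` the divisor map on nonzero functions,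
`t P` the pullback by translation-by-`P`, `ng` the pullback by the inversion `[-1]`, and
`ev P f` the value `f(P)` of `f` at `P` (meaningful when `f` is regular at `P`).
-/

variable {k E Fn : Type*} [Field k] [IsAlgClosed k] [CharZero k]
  [AddCommGroup E] [DecidableEq E] [Field Fn]

/-- Membership in the theta group `Θₙ`: pairs `(f, T)` with `T ∈ E[n]` and
`div(f) = τ_T^*(n·O) - n·O = n·(-T) - n·(O)`. -/
def ThetaMem (div : Fnˣ → (E →₀ ℤ)) (n : ℕ) (p : Fnˣ × E) : Prop :=
  n • p.2 = 0 ∧ ∀ P : E, div p.1 P =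
    (if P = -p.2 then (n : ℤ) else 0) - (if P = 0 then (n : ℤ) else 0)

/-- The group law `(f, S) * (g, T) = ((τ_T^* f)·g, S + T)` on the theta group. -/
def thetaMul (t : E → Fn ≃+* Fn) (p q : Fnˣ × E) : Fnˣ × E :=
  (Units.map (t q.2 : Fn →* Fn) p.1 * q.1, p.2 + q.2)

/-- The map `Θₘ × Θₙ → Θₘₙ`, `((f, S), (g, T)) ↦ (fⁿ, S) * (gᵐ, T)`. -/
def thetaCombine (t : E → Fn ≃+* Fn) (m n : ℕ) (p q : Fnˣ × E) : Fnˣ × E :=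
  thetaMul t (p.1 ^ n, p.2) (q.1 ^ m, q.2)

theorem theta_key
    (ι : k →+* Fn)
    (div : Fnˣ → (E →₀ ℤ))
    (hdivmul : ∀ f g : Fnˣ, div (f * g) = div f + div g)
    (hconst : ∀ f : Fnˣ, div f = 0 → ∃ c : kˣ, (f : Fn) = ι c)
    (t : E → Fn ≃+* Fn)
    (ht0 : t 0 = RingEquiv.refl Fn)
    (htadd : ∀ (P Q : E) (f : Fn), t P (t Q f) = t (P + Q) f)
    (htconst : ∀ (P : E) (c : k), t P (ι c) = ι c)
    (htdiv : ∀ (Q : E) (f : Fnˣ) (P : E),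
      div (Units.map (t Q : Fn →* Fn) f) P = div f (P + Q))
    (D : ℤ) (N : ℕ) (S T : E) (F G : Fnˣ) (c : kˣ)
    (hS : N • S = 0)
    (hF : ∀ P : E, div F P = (if P = -S then D else 0) - (if P = 0 then D else 0))
    (hR : Units.map (t T : Fn →* Fn) F * G
        = Units.map (ι : k →* Fn) c * (Units.map (t S : Fn →* Fn) G * F)) :
    c ^ N = 1 := by
  set U : E → Fnˣ →* Fnˣ := fun Q => Units.map (t Q : Fn →* Fn) with hU
  set ιu : kˣ →* Fnˣ := Units.map (ι : k →* Fn) with hιu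
  have hU0 : ∀ h : Fnˣ, U 0 h = h := by
    intro h; ext; simp [hU, ht0]
  have hUadd : ∀ (P Q : E) (h : Fnˣ), U P (U Q h) = U (P + Q) h := by
    intro P Q h; ext; simp [hU, htadd]
  have hUc : ∀ (Q : E) (d : kˣ), U Q (ιu d) = ιu d := by
    intro Q d; ext; simp [hU, hιu, htconst]
  have hιinj : ∀ a b : kˣ, ιu a = ιu b → a = b := by
    intro a b h
    exact Units.ext (ι.injective (by simpa [hιu] using congrArg Units.val h))
  have hdiv1 : div (1 : Fnˣ) = 0 := by
    have h := hdivmul 1 1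
    rw [mul_one] at h
    exact (add_left_cancel (a := div (1 : Fnˣ)) (by rw [add_zero]; exact h)).symm
  set Fs : ℕ → Fnˣ := fun j => ∏ i ∈ Finset.range j, U (i • S) F with hFs
  have hFs0 : Fs 0 = 1 := by simp [hFs]
  have hFsS : ∀ j, Fs (j + 1) = U (j • S) F * Fs j := by
    intro j; simp [hFs, Finset.prod_range_succ, mul_comm]
  have hdivFs : ∀ j P, div (Fs j) P =
      (if P = -(j • S) then D else 0) - (if P = 0 then D else 0) := by
    intro j
    induction j with
    | zero => intro P; simp [hFs0, hdiv1]
    | succ j ih =>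
      intro P
      have e1 : (P + j • S = -S) ↔ (P = -((j + 1) • S)) := by
        rw [← eq_sub_iff_add_eq]
        constructor
        · intro h; rw [h, succ_nsmul]; abel
        · intro h; rw [h, succ_nsmul]; abel
      have e2 : (P + j • S = 0) ↔ (P = -(j • S)) := add_eq_zero_iff_eq_neg
      rw [hFsS, hdivmul, Finsupp.add_apply, htdiv, hF, ih, if_congr e1 rfl rfl,
        if_congr e2 rfl rfl]
      ring
  have hcomm : ∀ j, U T (Fs j) * G = ιu (c ^ j) * (U (j • S) G * Fs j) := by
    intro j
    induction j with
    | zero => simp [hFs0, hU0]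
    | succ j ih =>
      calc U T (Fs (j + 1)) * G
          = U (j • S + T) F * (U T (Fs j) * G) := by
            rw [hFsS, map_mul, hUadd, add_comm T (j • S)]
            simp [mul_comm, mul_assoc, mul_left_comm]
        _ = U (j • S + T) F * (ιu (c ^ j) * (U (j • S) G * Fs j)) := by rw [ih]
        _ = ιu (c ^ j) * ((U (j • S) (U T F * G)) * Fs j) := by
            rw [map_mul, hUadd]
            simp [mul_comm, mul_assoc, mul_left_comm]
        _ = ιu (c ^ j) * ((ιu c * (U (j • S + S) G * U (j • S) F)) * Fs j) := by
            rw [hR, map_mul, map_mul, hUc, hUadd]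
        _ = ιu (c ^ (j + 1)) * (U ((j + 1) • S) G * Fs (j + 1)) := by
            rw [hFsS, pow_succ, map_mul, succ_nsmul]
            simp [mul_comm, mul_assoc, mul_left_comm]
  have h1 := hcomm N
  rw [hS, hU0] at h1
  have hd0 : div (Fs N) = 0 := by
    ext P
    rw [hdivFs N P, hS, neg_zero]
    simp
  obtain ⟨d, hd⟩ := hconst _ hd0
  have hFd : Fs N = ιu d := Units.ext (by simpa [hιu] using hd)
  rw [hFd, hUc] at h1
  have h2 : ιu (c ^ N) * (G * ιu d) = 1 * (G * ιu d) := by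
    rw [one_mul, ← h1, mul_comm]
  have h3 : ιu (c ^ N) = 1 := mul_right_cancel h2
  exact hιinj _ _ (by rw [h3, map_one])


/-- **(Fisher, Proposition 3.8.)** For coprime `m`, `n`, the commutator of `(fⁿ, S)` and
`(gᵐ, T)` in `Θₘₙ` is trivial for all `(f, S) ∈ Θₘ` and `(g, T) ∈ Θₙ`; consequently
`((f, S), (g, T)) ↦ (fⁿ, S) * (gᵐ, T)` defines a group homomorphism `Θₘ × Θₙ → Θₘₙ`. -/
theorem theta_combine_hom
    (ι : k →+* Fn)
    (div : Fnˣ → (E →₀ ℤ))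
    (hdivmul : ∀ f g : Fnˣ, div (f * g) = div f + div g)
    (hconst : ∀ f : Fnˣ, div f = 0 → ∃ c : kˣ, (f : Fn) = ι c)
    (t : E → Fn ≃+* Fn)
    (ht0 : t 0 = RingEquiv.refl Fn)
    (htadd : ∀ (P Q : E) (f : Fn), t P (t Q f) = t (P + Q) f)
    (htconst : ∀ (P : E) (c : k), t P (ι c) = ι c)
    (htdiv : ∀ (Q : E) (f : Fnˣ) (P : E),
      div (Units.map (t Q : Fn →* Fn) f) P = div f (P + Q))
    (ng : Fn ≃+* Fn)
    (hngdiv : ∀ (f : Fnˣ) (P : E), div (Units.map (ng : Fn →* Fn) f) P = div f (-P))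
    (hngt : ∀ (Q : E) (f : Fn), ng (t Q f) = t (-Q) (ng f))
    (hngconst : ∀ c : k, ng (ι c) = ι c)
    (ev : E → Fn → k)
    (hevconst : ∀ (P : E) (c : k), ev P (ι c) = c)
    (hevmul : ∀ (P : E) (f g : Fnˣ), 0 ≤ div f P → 0 ≤ div g P →
      ev P ((f : Fn) * g) = ev P f * ev P g)
    (hevt : ∀ (P Q : E) (f : Fnˣ), 0 ≤ div f (P + Q) → ev P (t Q f) = ev (P + Q) f)
    (hevng : ∀ (P : E) (f : Fnˣ), 0 ≤ div f (-P) → ev P (ng f) = ev (-P) f)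
    (hevne : ∀ (P : E) (f : Fnˣ), div f P = 0 → ev P (f : Fn) ≠ 0)
    (m n : ℕ) (hm : 0 < m) (hn : 0 < n) (hmn : Nat.Coprime m n) :
    (∀ p q : Fnˣ × E, ThetaMem div m p → ThetaMem div n q →
      thetaMul t (p.1 ^ n, p.2) (q.1 ^ m, q.2) =
        thetaMul t (q.1 ^ m, q.2) (p.1 ^ n, p.2)) ∧
    (∀ p q : Fnˣ × E, ThetaMem div m p → ThetaMem div n q →
      ThetaMem div (m * n) (thetaCombine t m n p q)) ∧
    (∀ p p' q q' : Fnˣ × E, ThetaMem div m p → ThetaMem div m p' →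
      ThetaMem div n q → ThetaMem div n q' →
      thetaCombine t m n (thetaMul t p p') (thetaMul t q q') =
        thetaMul t (thetaCombine t m n p q) (thetaCombine t m n p' q')) := by
  
  set U : E → Fnˣ →* Fnˣ := fun Q => Units.map (t Q : Fn →* Fn) with hU
  set ιu : kˣ →* Fnˣ := Units.map (ι : k →* Fn) with hιu
  have hUadd : ∀ (P Q : E) (h : Fnˣ), U P (U Q h) = U (P + Q) h := by
    intro P Q h; ext; simp [hU, htadd]
  have hιinj : ∀ a b : kˣ, ιu a = ιu b → a = b := by
    intro a b h
    exact Units.ext (ι.injective (by simpa [hιu] using congrArg Units.val h))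
  have hdiv1 : div (1 : Fnˣ) = 0 := by
    have h := hdivmul 1 1
    rw [mul_one] at h
    exact (add_left_cancel (a := div (1 : Fnˣ)) (by rw [add_zero]; exact h)).symm
  have hdivinv : ∀ f : Fnˣ, div f⁻¹ = - div f := by
    intro f
    have h := hdivmul f f⁻¹
    rw [mul_inv_cancel, hdiv1] at h
    exact eq_neg_of_add_eq_zero_right h.symm
  have hdivpow : ∀ (f : Fnˣ) (j : ℕ) (P : E), div (f ^ j) P = j * div f P := by
    intro f j P
    induction j with
    | zero => simp [hdiv1]
    | succ j ih => rw [pow_succ, hdivmul, Finsupp.add_apply, ih]; push_cast; ring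
  have hif : ∀ (P A B : E) (d : ℤ),
      (if P + A = B then d else 0) = (if P = B - A then d else 0) :=
    fun P A B d => if_congr eq_sub_iff_add_eq.symm rfl rfl
  set D : ℤ := (m : ℤ) * n with hD
  have hFpow : ∀ p : Fnˣ × E, ThetaMem div m p → ∀ P : E,
      div (p.1 ^ n) P = (if P = -p.2 then D else 0) - (if P = 0 then D else 0) := by
    intro p hp P
    rw [hdivpow, hp.2 P]
    split_ifs <;> push_cast <;> ring
  have hGpow : ∀ q : Fnˣ × E, ThetaMem div n q → ∀ P : E,
      div (q.1 ^ m) P = (if P = -q.2 then D else 0) - (if P = 0 then D else 0) := by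
    intro q hq P
    rw [hdivpow, hq.2 P]
    split_ifs <;> push_cast <;> ring
  have comm1 : ∀ p q : Fnˣ × E, ThetaMem div m p → ThetaMem div n q →
      U q.2 (p.1 ^ n) * q.1 ^ m = U p.2 (q.1 ^ m) * p.1 ^ n := by
    intro p q hp hq
    set S := p.2
    set T := q.2
    set F := p.1 ^ n with hFdef
    set G := q.1 ^ m with hGdef
    set u : Fnˣ := U T F * G * (U S G * F)⁻¹ with hu
    have hdivu : div u = 0 := by
      ext P
      rw [hu, hdivmul, hdivinv, hdivmul, hdivmul]
      simp only [Finsupp.add_apply, Finsupp.neg_apply, Finsupp.coe_zero, Pi.zero_apply]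
      rw [show ∀ h : Fnˣ, div (U T h) P = div h (P + T) from fun h => htdiv T h P,
        show ∀ h : Fnˣ, div (U S h) P = div h (P + S) from fun h => htdiv S h P]
      rw [hFpow p hp, hFpow p hp, hGpow q hq, hGpow q hq]
      rw [hif, hif, hif, hif]
      rw [show (0 : E) - T = -T by abel, show (0 : E) - S = -S by abel,
        show -T - S = -S - T by abel]
      ring
    obtain ⟨c, hc⟩ := hconst u hdivu
    have hcu : u = ιu c := Units.ext (by simpa [hιu] using hc)
    have hR : U T F * G = ιu c * (U S G * F) := by
      rw [← hcu, hu, inv_mul_cancel_right]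
    have hcm : c ^ m = 1 :=
      theta_key ι div hdivmul hconst t ht0 htadd htconst htdiv D m S T F G c
        hp.1 (hFpow p hp) hR
    have hR' : U S G * F = ιu c⁻¹ * (U T F * G) := by
      rw [map_inv, hR, inv_mul_cancel_left]
    have hcn : c ^ n = 1 := by
      have h := theta_key ι div hdivmul hconst t ht0 htadd htconst htdiv D n T S G F c⁻¹
        hq.1 (hGpow q hq) hR'
      rw [inv_pow, inv_eq_one] at h
      exact h
    have hc1 : c = 1 := by
      have hb := Nat.gcd_eq_gcd_ab m n
      rw [hmn.gcd_eq_one] at hb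
      push_cast at hb
      calc c = c ^ (1 : ℤ) := (zpow_one c).symm
        _ = c ^ ((m : ℤ) * Nat.gcdA m n + (n : ℤ) * Nat.gcdB m n) := by rw [← hb]
        _ = (c ^ (m : ℤ)) ^ Nat.gcdA m n * (c ^ (n : ℤ)) ^ Nat.gcdB m n := by
            rw [zpow_add, zpow_mul, zpow_mul]
        _ = 1 := by
            rw [zpow_natCast, zpow_natCast, hcm, hcn, one_zpow, one_zpow, one_mul]
    have : u = 1 := by rw [hcu, hc1, map_one]
    rw [hu] at this
    exact mul_inv_eq_one.mp this
  refine ⟨?_, ?_, ?_⟩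
  · intro p q hp hq
    unfold thetaMul
    exact Prod.ext (comm1 p q hp hq) (add_comm _ _)
  · intro p q hp hq
    constructor
    · show (m * n) • (p.2 + q.2) = 0
      have h1 : (m * n) • p.2 = 0 := by rw [Nat.mul_comm, mul_smul, hp.1, smul_zero]
      have h2 : (m * n) • q.2 = 0 := by rw [mul_smul, hq.1, smul_zero]
      rw [smul_add, h1, h2, add_zero]
    · intro P
      simp only [thetaCombine, thetaMul]
      rw [hdivmul, Finsupp.add_apply,
        show div (U q.2 (p.1 ^ n)) P = div (p.1 ^ n) (P + q.2) from htdiv q.2 _ P,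
        hFpow p hp, hGpow q hq, hif, hif]
      rw [show -p.2 - q.2 = -(p.2 + q.2) by abel, show (0 : E) - q.2 = -q.2 by abel]
      push_cast
      ring
  · intro p p' q q' hp hp' hq hq'
    have hc := comm1 p' q hp' hq
    have hc' : U (q'.2 + q.2) (p'.1 ^ n) * U q'.2 (q.1 ^ m)
        = U (q'.2 + p'.2) (q.1 ^ m) * U q'.2 (p'.1 ^ n) := by
      have := congrArg (U q'.2) hc
      rw [map_mul, map_mul, hUadd, hUadd] at this
      exact this
    refine Prod.ext ?_ ?_
    · simp only [thetaCombine, thetaMul, mul_pow, ← map_pow, map_mul, hUadd]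
      have key2 : ∀ X d a b a' b' : Fnˣ, a * b = a' * b' →
          X * a * (b * d) = X * a' * (b' * d) := by
        intro X d a b a' b' h
        calc X * a * (b * d) = (a * b) * (X * d) := by
              simp [mul_comm, mul_assoc, mul_left_comm]
          _ = (a' * b') * (X * d) := by rw [h]
          _ = X * a' * (b' * d) := by simp [mul_comm, mul_assoc, mul_left_comm]
      have hX : Units.map (t (q'.2 + q.2) : Fn →* Fn) (Units.map (t p'.2 : Fn →* Fn) (p.1 ^ n))
          = Units.map (t (q'.2 + p'.2) : Fn →* Fn) (Units.map (t q.2 : Fn →* Fn) (p.1 ^ n)) := by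
        have h1 := hUadd (q'.2 + q.2) p'.2 (p.1 ^ n)
        have h2 := hUadd (q'.2 + p'.2) q.2 (p.1 ^ n)
        rw [show q'.2 + q.2 + p'.2 = q'.2 + p'.2 + q.2 by abel] at h1
        exact h1.trans h2.symm
      rw [show q.2 + q'.2 = q'.2 + q.2 from add_comm _ _,
        show p'.2 + q'.2 = q'.2 + p'.2 from add_comm _ _,
        hX]
      exact key2 _ _ _ _ _ _ hc'
    · simp only [thetaCombine, thetaMul]
      abel
end

section
/- Define ψ_a : H → H by ψ_a(h) = λ(h)^{a(a-1)/2}·h^a, where λ : H → Z is the map h ↦ ι h ι^{-1} h for a fixed element ι normalizing H with ι² central, and λ satisfies λ(xy) = λ(x)λ(y)[x,y] (with [x,y] = xyx^{-1}y^{-1} central). Suppose H is a group whose commutator subgroup is contained in its center Z, Z has exponent n, a is an integer coprime to n, and λ takes values in Z. Then ψ_a is a group homomorphism. -/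
open scoped commutatorElement

private lemma psi_half_arith (i : ℤ) :
    (i + 1) * ((i + 1) - 1) / 2 = i * (i - 1) / 2 + i ∧
    (i - 1) * ((i - 1) - 1) / 2 = i * (i - 1) / 2 - (i - 1) := by
  obtain ⟨k, hk⟩ : Even (i * (i - 1)) := by
    simpa [mul_comm] using Int.even_mul_succ_self (i - 1)
  have e1 : (i + 1) * ((i + 1) - 1) = k + k + 2 * i := by rw [← hk]; ring
  have e2 : (i - 1) * ((i - 1) - 1) = k + k - 2 * (i - 1) := by rw [← hk]; ring
  rw [e1, e2, hk]
  omega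

/-- If `u * x = x * u * d` with `d` commuting with everything, then
`u * x ^ j = x ^ j * u * d ^ j` for all integers `j`. -/
private lemma psi_swap_aux {H : Type*} [Group H] (x u d : H)
    (hd : ∀ g : H, Commute d g) (h : u * x = x * u * d) :
    ∀ j : ℤ, u * x ^ j = x ^ j * u * d ^ j := by
  have hd' : ∀ (j : ℤ) (g : H), d ^ j * g = g * d ^ j := fun j g => ((hd g).zpow_left j).eq
  have hxu : x * u = u * x * d⁻¹ := by rw [h]; group
  have hdinv : d⁻¹ * x⁻¹ = x⁻¹ * d⁻¹ := ((hd x⁻¹).inv_left).eq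
  have hinv : u * x⁻¹ = x⁻¹ * u * d⁻¹ := by
    calc u * x⁻¹ = x⁻¹ * (x * u) * x⁻¹ := by group
      _ = x⁻¹ * (u * x * d⁻¹) * x⁻¹ := by rw [hxu]
      _ = x⁻¹ * u * x * (d⁻¹ * x⁻¹) := by group
      _ = x⁻¹ * u * x * (x⁻¹ * d⁻¹) := by rw [hdinv]
      _ = x⁻¹ * u * d⁻¹ := by group
  intro j
  induction j using Int.induction_on with
  | zero => simp
  | succ j ih =>
      calc u * x ^ ((j : ℤ) + 1) = (u * x ^ (j : ℤ)) * x := by rw [zpow_add_one]; group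
        _ = x ^ (j : ℤ) * u * (d ^ (j : ℤ) * x) := by rw [ih]; group
        _ = x ^ (j : ℤ) * u * (x * d ^ (j : ℤ)) := by rw [hd' (j : ℤ) x]
        _ = x ^ (j : ℤ) * (u * x) * d ^ (j : ℤ) := by group
        _ = x ^ (j : ℤ) * (x * u * d) * d ^ (j : ℤ) := by rw [h]
        _ = x ^ ((j : ℤ) + 1) * u * d ^ ((j : ℤ) + 1) := by
            rw [zpow_add_one, zpow_add_one]; group
  | pred j ih =>
      calc u * x ^ (-(j : ℤ) - 1) = (u * x ^ (-(j : ℤ))) * x⁻¹ := by rw [zpow_sub_one]; group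
        _ = x ^ (-(j : ℤ)) * u * (d ^ (-(j : ℤ)) * x⁻¹) := by rw [ih]; group
        _ = x ^ (-(j : ℤ)) * u * (x⁻¹ * d ^ (-(j : ℤ))) := by rw [hd' (-(j : ℤ)) x⁻¹]
        _ = x ^ (-(j : ℤ)) * (u * x⁻¹) * d ^ (-(j : ℤ)) := by group
        _ = x ^ (-(j : ℤ)) * (x⁻¹ * u * d⁻¹) * d ^ (-(j : ℤ)) := by rw [hinv]
        _ = x ^ (-(j : ℤ) - 1) * u * d ^ (-(j : ℤ) - 1) := by
            rw [zpow_sub_one, zpow_sub_one]; group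

/-- In a group where the commutator `⁅y, x⁆` is central,
`(x * y) ^ a = x ^ a * y ^ a * ⁅y, x⁆ ^ (a * (a - 1) / 2)` for all integers `a`. -/
private lemma psi_class2_mul_zpow {H : Type*} [Group H] (x y : H)
    (hc : ∀ g : H, Commute ⁅y, x⁆ g) (a : ℤ) :
    (x * y) ^ a = x ^ a * y ^ a * ⁅y, x⁆ ^ (a * (a - 1) / 2) := by
  set c : H := ⁅y, x⁆ with hcdef
  have hc' : ∀ (j : ℤ) (g : H), c ^ j * g = g * c ^ j := fun j g => ((hc g).zpow_left j).eq
  have hxy : x * y = y * x * c⁻¹ := by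
    have h0 : x * y = c⁻¹ * (y * x) := by rw [hcdef, commutatorElement_def]; group
    rw [h0, ((hc (y * x)).inv_left).eq, mul_assoc]
  have key0 : ∀ i : ℤ, x * y ^ i = y ^ i * x * (c⁻¹) ^ i :=
    psi_swap_aux y x c⁻¹ (fun g => (hc g).inv_left) hxy
  have key1 : ∀ i : ℤ, y ^ i * x = x * y ^ i * c ^ i := by
    intro i
    have h0 := key0 i
    calc y ^ i * x = (y ^ i * x * (c⁻¹) ^ i) * ((c⁻¹) ^ i)⁻¹ := by group
      _ = (x * y ^ i) * ((c⁻¹) ^ i)⁻¹ := by rw [← h0]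
      _ = x * y ^ i * c ^ i := by group
  have key2 : ∀ i j : ℤ, y ^ i * x ^ j = x ^ j * y ^ i * c ^ (i * j) := by
    intro i j
    have := psi_swap_aux x (y ^ i) (c ^ i) (fun g => (hc g).zpow_left i) (key1 i) j
    rw [this, ← zpow_mul]
  induction a using Int.induction_on with
  | zero => simp
  | succ i ih =>
      have harith := (psi_half_arith (i : ℤ)).1
      rw [zpow_add_one (x * y), ih, harith, zpow_add_one x, zpow_add_one y, zpow_add]
      calc x ^ (i : ℤ) * y ^ (i : ℤ) * c ^ ((i : ℤ) * ((i : ℤ) - 1) / 2) * (x * y)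
          = x ^ (i : ℤ) * y ^ (i : ℤ) * (c ^ ((i : ℤ) * ((i : ℤ) - 1) / 2) * x) * y := by group
        _ = x ^ (i : ℤ) * y ^ (i : ℤ) * (x * c ^ ((i : ℤ) * ((i : ℤ) - 1) / 2)) * y := by
            rw [hc' _ x]
        _ = x ^ (i : ℤ) * (y ^ (i : ℤ) * x) * (c ^ ((i : ℤ) * ((i : ℤ) - 1) / 2) * y) := by group
        _ = x ^ (i : ℤ) * (y ^ (i : ℤ) * x) * (y * c ^ ((i : ℤ) * ((i : ℤ) - 1) / 2)) := by
            rw [hc' _ y]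
        _ = x ^ (i : ℤ) * (x * y ^ (i : ℤ) * c ^ (i : ℤ)) *
              (y * c ^ ((i : ℤ) * ((i : ℤ) - 1) / 2)) := by rw [key1]
        _ = x ^ (i : ℤ) * x * y ^ (i : ℤ) * (c ^ (i : ℤ) * y) *
              c ^ ((i : ℤ) * ((i : ℤ) - 1) / 2) := by group
        _ = x ^ (i : ℤ) * x * y ^ (i : ℤ) * (y * c ^ (i : ℤ)) *
              c ^ ((i : ℤ) * ((i : ℤ) - 1) / 2) := by rw [hc' _ y]
        _ = x ^ (i : ℤ) * x * (y ^ (i : ℤ) * y) *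
              (c ^ ((i : ℤ) * ((i : ℤ) - 1) / 2) * c ^ (i : ℤ)) := by group
  | pred i ih =>
      have harith := (psi_half_arith (-(i : ℤ))).2
      rw [zpow_sub_one (x * y), ih, harith, zpow_sub_one x, zpow_sub_one y]
      have hswap : y ^ (-(i : ℤ) - 1) * x⁻¹ =
          x⁻¹ * y ^ (-(i : ℤ) - 1) * c ^ ((i : ℤ) + 1) := by
        have h := key2 (-(i : ℤ) - 1) (-1)
        rw [zpow_neg_one, show (-(i : ℤ) - 1) * -1 = (i : ℤ) + 1 by ring] at h
        exact h
      calc x ^ (-(i : ℤ)) * y ^ (-(i : ℤ)) * c ^ (-(i : ℤ) * (-(i : ℤ) - 1) / 2) * (x * y)⁻¹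
          = x ^ (-(i : ℤ)) * y ^ (-(i : ℤ)) *
              (c ^ (-(i : ℤ) * (-(i : ℤ) - 1) / 2) * (y⁻¹ * x⁻¹)) := by group
        _ = x ^ (-(i : ℤ)) * y ^ (-(i : ℤ)) *
              ((y⁻¹ * x⁻¹) * c ^ (-(i : ℤ) * (-(i : ℤ) - 1) / 2)) := by
            rw [hc' (-(i : ℤ) * (-(i : ℤ) - 1) / 2) (y⁻¹ * x⁻¹)]
        _ = x ^ (-(i : ℤ)) * (y ^ (-(i : ℤ) - 1) * x⁻¹) *
              c ^ (-(i : ℤ) * (-(i : ℤ) - 1) / 2) := by rw [zpow_sub_one]; group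
        _ = x ^ (-(i : ℤ)) * (x⁻¹ * y ^ (-(i : ℤ) - 1) * c ^ ((i : ℤ) + 1)) *
              c ^ (-(i : ℤ) * (-(i : ℤ) - 1) / 2) := by rw [hswap]
        _ = x ^ (-(i : ℤ)) * x⁻¹ * (y ^ (-(i : ℤ)) * y⁻¹) *
              (c ^ (-(i : ℤ) * (-(i : ℤ) - 1) / 2) * c ^ ((i : ℤ) + 1)) := by
            rw [show y ^ (-(i : ℤ) - 1) = y ^ (-(i : ℤ)) * y⁻¹ from zpow_sub_one y _]; group
        _ = x ^ (-(i : ℤ)) * x⁻¹ * (y ^ (-(i : ℤ)) * y⁻¹) *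
              c ^ (-(i : ℤ) * (-(i : ℤ) - 1) / 2 - (-(i : ℤ) - 1)) := by
            rw [← zpow_add]
            congr 1
            ring

/-- Let `H` be a group whose commutator subgroup is contained in its centre `Z`, with `Z` of
exponent `n`, and let `lam : H → Z` satisfy `lam (x*y) = lam x * lam y * ⁅x,y⁆`.
For `a` an integer coprime to `n`, the map `ψₐ : h ↦ lam h ^ (a(a-1)/2) * h ^ a` is a group
homomorphism. -/
theorem psi_a_is_group_hom {H : Type*} [Group H] (n : ℕ)
    (hcomm : ∀ x y : H, ⁅x, y⁆ ∈ Subgroup.center H)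
    (hexp : ∀ z ∈ Subgroup.center H, z ^ n = 1)
    (lam : H → H)
    (hlamZ : ∀ h : H, lam h ∈ Subgroup.center H)
    (hlam : ∀ x y : H, lam (x * y) = lam x * lam y * ⁅x, y⁆)
    (a : ℤ) (ha : IsCoprime a (n : ℤ)) :
    ∀ x y : H,
      lam (x * y) ^ (a * (a - 1) / 2) * (x * y) ^ a =
        (lam x ^ (a * (a - 1) / 2) * x ^ a) * (lam y ^ (a * (a - 1) / 2) * y ^ a) := by
  intro x y
  set m : ℤ := a * (a - 1) / 2 with hm
  have cen : ∀ z : H, z ∈ Subgroup.center H → ∀ g : H, Commute z g :=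
    fun z hz g => ((Subgroup.mem_center_iff.mp hz g)).symm
  have hcyx : ∀ g : H, Commute ⁅y, x⁆ g := cen _ (hcomm y x)
  have hpow := psi_class2_mul_zpow x y hcyx a
  have hxyyx : ⁅x, y⁆ = ⁅y, x⁆⁻¹ := (commutatorElement_inv y x).symm
  rw [hlam x y, hpow, hxyyx]
  set c : H := ⁅y, x⁆
  set L1 : H := lam x
  set L2 : H := lam y
  have h12 : Commute L1 L2 := cen _ (hlamZ x) L2
  have h12c : Commute (L1 * L2) c⁻¹ := ((hcyx (L1 * L2)).inv_left).symm
  have hsplit : (L1 * L2 * c⁻¹) ^ m = L1 ^ m * L2 ^ m * (c⁻¹) ^ m := by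
    rw [h12c.mul_zpow, h12.mul_zpow]
  rw [hsplit]
  have hL2x : L2 ^ m * x ^ a = x ^ a * L2 ^ m :=
    ((cen _ (hlamZ y) (x ^ a)).zpow_left m).eq
  have hcm : ∀ g : H, (c⁻¹) ^ m * g = g * (c⁻¹) ^ m :=
    fun g => (((hcyx g).inv_left).zpow_left m).eq
  calc L1 ^ m * L2 ^ m * (c⁻¹) ^ m * (x ^ a * y ^ a * c ^ m)
      = L1 ^ m * L2 ^ m * ((c⁻¹) ^ m * (x ^ a * y ^ a)) * c ^ m := by group
    _ = L1 ^ m * L2 ^ m * ((x ^ a * y ^ a) * (c⁻¹) ^ m) * c ^ m := by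
        rw [hcm (x ^ a * y ^ a)]
    _ = L1 ^ m * (L2 ^ m * x ^ a) * y ^ a := by group
    _ = L1 ^ m * (x ^ a * L2 ^ m) * y ^ a := by rw [hL2x]
    _ = L1 ^ m * x ^ a * (L2 ^ m * y ^ a) := by group
end
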